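/- Let P be a finite set of points on the unit sphere S^{d−1} = {x ∈ ℝ^d : ‖x‖ = 1} such that any two distinct points of P are at distance at least s > 0 from each other. Then for every p ∈ P, the distance from p to the convex hull of P \ {p} is at least s²/2. -/

import Mathlib

open Metric
open scoped Classical

theorem packing_on_sphere_far_from_hull_of_others
    (d : ℕ) (P : Finset (EuclideanSpace ℝ (Fin d)))
    (hcard : 2 ≤ P.card)
    (hsphere : ∀ p ∈ P, ‖p‖ = 1)
    (s : ℝ) (hs : 0 < s)
    (hsep : ∀ p ∈ P, ∀ q ∈ P, p ≠ q → s ≤ ‖p - q‖) :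
    ∀ p ∈ P,
      s ^ 2 / 2 ≤
        Metric.infDist p
          (convexHull ℝ (↑(P.erase p) : Set (EuclideanSpace ℝ (Fin d)))) := by
  intro p hp
  have hpnorm : ‖p‖ = 1 := hsphere p hp
  -- Every point of the hull has inner product with p at most 1 - s^2/2
  have hhull : ∀ x ∈ convexHull ℝ (↑(P.erase p) : Set (EuclideanSpace ℝ (Fin d))),
      inner ℝ p x ≤ (1 : ℝ) - s ^ 2 / 2 := by
    have hconv : Convex ℝ {x : EuclideanSpace ℝ (Fin d) | inner ℝ p x ≤ (1 : ℝ) - s ^ 2 / 2} :=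
      convex_halfSpace_le (LinearMap.isLinear (innerSL ℝ p).toLinearMap) _
    have hsub : (↑(P.erase p) : Set (EuclideanSpace ℝ (Fin d))) ⊆
        {x | inner ℝ p x ≤ (1 : ℝ) - s ^ 2 / 2} := by
      intro q hq
      simp only [Finset.coe_erase, Set.mem_diff, Set.mem_singleton_iff, Finset.mem_coe] at hq
      obtain ⟨hqP, hqp⟩ := hq
      have hsep' : s ≤ ‖p - q‖ := hsep p hp q hqP (fun h => hqp h.symm)
      have hq1 : ‖q‖ = 1 := hsphere q hqP
      have hexp : ‖p - q‖ ^ 2 = 2 - 2 * inner ℝ p q := by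
        rw [norm_sub_sq_real, hpnorm, hq1]; ring
      have h2 : s ^ 2 ≤ 2 - 2 * inner ℝ p q := by
        rw [← hexp]
        exact pow_le_pow_left₀ hs.le hsep' 2
      have : (inner ℝ p q : ℝ) ≤ 1 - s ^ 2 / 2 := by linarith
      exact this
    exact fun x hx => convexHull_min hsub hconv hx
  -- hull points are far
  have hne : (convexHull ℝ (↑(P.erase p) : Set (EuclideanSpace ℝ (Fin d)))).Nonempty := by
    apply Set.Nonempty.mono (subset_convexHull ℝ _)
    have : (P.erase p).Nonempty := by
      rw [← Finset.card_pos, Finset.card_erase_of_mem hp]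
      omega
    exact Finset.coe_nonempty.mpr this
  by_contra hcon
  rw [not_le, infDist_lt_iff hne] at hcon
  obtain ⟨x, hx, hdx⟩ := hcon
  have h1 : (inner ℝ p x : ℝ) ≤ 1 - s ^ 2 / 2 := hhull x hx
  have h2 : (inner ℝ p (p - x) : ℝ) ≤ ‖p‖ * ‖p - x‖ := real_inner_le_norm _ _
  have h3 : (inner ℝ p (p - x) : ℝ) = 1 - inner ℝ p x := by
    rw [inner_sub_right, real_inner_self_eq_norm_sq, hpnorm]; ring
  rw [dist_eq_norm p x] at hdx
  nlinarith [norm_nonneg (p - x)]
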